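/- For every real x with 0 ≤ x ≤ 1, one has (1+x)^{1+x} − 1 ≤ 8·log(1+x). -/

import Mathlib

/-- For 0 ≤ x ≤ 1, (1+x)^{1+x} − 1 ≤ 8·log(1+x). -/
theorem stmt_5 (x : ℝ) (h0 : 0 ≤ x) (h1 : x ≤ 1) :
    Real.exp ((1 + x) * Real.log (1 + x)) - 1 ≤ 8 * Real.log (1 + x) := by
  have hx1 : (0:ℝ) < 1 + x := by linarith
  set L := Real.log (1 + x) with hLdef
  have hL0 : 0 ≤ L := Real.log_nonneg (by linarith)
  -- L ≥ x/2 : log(1+x) ≥ 1 - 1/(1+x) = x/(1+x) ≥ x/2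
  have hinv : 1 - (1+x)⁻¹ ≤ L := Real.one_sub_inv_le_log_of_pos hx1
  have hfrac : x / 2 ≤ 1 - (1+x)⁻¹ := by
    rw [inv_eq_one_div, sub_div' (ne_of_gt hx1)] at *
    rw [div_le_div_iff₀ (by norm_num) hx1]
    ring_nf
    nlinarith
  have hLx : x / 2 ≤ L := le_trans hfrac hinv
  -- exp((1+x)L) ≤ exp(2L)
  have hmono : Real.exp ((1 + x) * L) ≤ Real.exp (2 * L) := by
    apply Real.exp_le_exp.mpr
    nlinarith
  have hexp2 : Real.exp (2 * L) = (1 + x) ^ 2 := by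
    rw [mul_comm, Real.exp_mul, Real.exp_log hx1, Real.rpow_two]
  nlinarith [hmono, hexp2]
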